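/- Let F be a finite field of order q, let d be an invertible exponent over F, and let k be a positive integer. Let b_1, …, b_k be nonzero elements of F, and let N_{b_1,…,b_k} be the number of k-tuples (x_1,…,x_k) ∈ F^k satisfying both b_1·x_1 + ⋯ + b_k·x_k = 0 and x_1^d + ⋯ + x_k^d = 0. Then Σ_{a ∈ F, a ≠ 0} Π_{j=1}^{k} W_{F,d}(b_j·a) = (q²·N_{b_1,…,b_k} − q^k)/(q − 1). -/

import Mathlib

open scoped BigOperators

/-- The canonical additive character of a finite field `F` of characteristic `p`:
`ψ(x) = exp(2πi·Tr(x)/p)`, where `Tr` is the absolute trace from `F` to `𝔽_p = ZMod p`. -/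
noncomputable def canonicalPsi (F : Type*) [Field F] [Fintype F] (p : ℕ) [CharP F p]
    (x : F) : ℂ :=
  letI : Algebra (ZMod p) F := ZMod.algebra F p
  Complex.exp (2 * Real.pi * Complex.I * ((Algebra.trace (ZMod p) F x).val : ℂ) / (p : ℂ))

/-- The Weil sum `W_{F,d}(a) = ∑_{x ∈ F} ψ(x^d − a·x)`. -/
noncomputable def weilSum (F : Type*) [Field F] [Fintype F] (p : ℕ) [CharP F p]
    (d : ℕ) (a : F) : ℂ :=
  ∑ x : F, canonicalPsi F p (x ^ d - a * x)

set_option linter.unusedSectionVars false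

section Aux

variable {F : Type*} [Field F] [Fintype F] [DecidableEq F] {p : ℕ} [Fact p.Prime] [CharP F p]

private noncomputable def EE (p m : ℕ) : ℂ :=
  Complex.exp (2 * Real.pi * Complex.I * (m : ℂ) / (p : ℂ))

private lemma EE_add (p m n : ℕ) : EE p (m + n) = EE p m * EE p n := by
  rw [EE, EE, EE, ← Complex.exp_add]
  congr 1
  push_cast
  ring

private lemma EE_p_mul (hp : p ≠ 0) (t : ℕ) : EE p (p * t) = 1 := by
  have hpc : (p : ℂ) ≠ 0 := Nat.cast_ne_zero.mpr hp
  have : (2 * Real.pi * Complex.I * ((p * t : ℕ) : ℂ) / (p : ℂ)) = (t : ℂ) * (2 * Real.pi * Complex.I) := by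
    push_cast
    field_simp
  rw [EE, this, Complex.exp_nat_mul_two_pi_mul_I]

private lemma EE_mod (hp : p ≠ 0) (m : ℕ) : EE p (m % p) = EE p m := by
  conv_rhs => rw [← Nat.div_add_mod m p]
  rw [EE_add, EE_p_mul hp, one_mul]

private lemma EE_ne_one {m : ℕ} (h0 : 0 < m) (hlt : m < p) : EE p m ≠ 1 := by
  intro h
  rw [EE, Complex.exp_eq_one_iff] at h
  obtain ⟨n, hn⟩ := h
  have hpc : (p : ℂ) ≠ 0 := Nat.cast_ne_zero.mpr (by omega)
  have h2 : (2 * Real.pi * Complex.I : ℂ) ≠ 0 := by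
    simp [Real.pi_ne_zero, Complex.I_ne_zero, Complex.ofReal_ne_zero]
  rw [div_eq_iff hpc] at hn
  have h3 : (m : ℂ) = (n : ℂ) * p := mul_left_cancel₀ h2 (by linear_combination hn)
  have h4 : (m : ℤ) = n * p := by exact_mod_cast h3
  have h5 : (p : ℤ) ∣ (m : ℤ) := ⟨n, by linarith⟩
  have h6 : p ∣ m := Int.ofNat_dvd.mp h5
  have := Nat.le_of_dvd h0 h6
  omega

private lemma psi_eq (x : F) :
    canonicalPsi F p x =
      letI : Algebra (ZMod p) F := ZMod.algebra F p
      EE p (Algebra.trace (ZMod p) F x).val := rfl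

private lemma psi_add (x y : F) :
    canonicalPsi F p (x + y) = canonicalPsi F p x * canonicalPsi F p y := by
  letI : Algebra (ZMod p) F := ZMod.algebra F p
  have hp : p ≠ 0 := (Fact.out : p.Prime).ne_zero
  haveI : NeZero p := ⟨hp⟩
  rw [psi_eq, psi_eq, psi_eq, map_add, ZMod.val_add, EE_mod hp, EE_add]

private lemma psi_zero : canonicalPsi F p 0 = 1 := by
  letI : Algebra (ZMod p) F := ZMod.algebra F p
  rw [psi_eq]
  simp [EE]

private lemma psi_exists_ne_one : ∃ c : F, canonicalPsi F p c ≠ 1 := by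
  letI : Algebra (ZMod p) F := ZMod.algebra F p
  have hp : p ≠ 0 := (Fact.out : p.Prime).ne_zero
  haveI : NeZero p := ⟨hp⟩
  have hpF : p = ringChar F := (ringChar.eq F p).symm
  subst hpF
  obtain ⟨c, hc⟩ := FiniteField.trace_to_zmod_nondegenerate F (a := (1 : F)) one_ne_zero
  rw [one_mul] at hc
  refine ⟨c, ?_⟩
  rw [psi_eq]
  refine EE_ne_one (Nat.pos_of_ne_zero fun h => hc ?_) (ZMod.val_lt _)
  rwa [← ZMod.val_eq_zero]

private lemma psi_sum {ι : Type*} (s : Finset ι) (f : ι → F) :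
    canonicalPsi F p (∑ i ∈ s, f i) = ∏ i ∈ s, canonicalPsi F p (f i) := by
  classical
  induction s using Finset.cons_induction with
  | empty => simpa using psi_zero
  | cons a s ha ih => rw [Finset.sum_cons, Finset.prod_cons, psi_add, ih]

private lemma sum_psi : ∑ y : F, canonicalPsi F p y = 0 := by
  obtain ⟨c, hc⟩ := psi_exists_ne_one (F := F) (p := p)
  have h : canonicalPsi F p c * ∑ y : F, canonicalPsi F p y = ∑ y : F, canonicalPsi F p y := by
    rw [Finset.mul_sum, ← Equiv.sum_comp (Equiv.addLeft c) (canonicalPsi F p)]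
    exact Finset.sum_congr rfl fun y _ => (psi_add c y).symm
  have h2 : (canonicalPsi F p c - 1) * ∑ y : F, canonicalPsi F p y = 0 := by
    linear_combination h
  rcases mul_eq_zero.mp h2 with h3 | h3
  · exact absurd (by linear_combination h3) hc
  · exact h3

private lemma sum_psi_mul (t : F) :
    ∑ a : F, canonicalPsi F p (a * t) = if t = 0 then (Fintype.card F : ℂ) else 0 := by
  rcases eq_or_ne t 0 with rfl | ht
  · simp [psi_zero]
  · rw [if_neg ht, ← sum_psi (F := F) (p := p)]
    exact Equiv.sum_comp (Equiv.mulRight₀ t ht) (canonicalPsi F p)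

private lemma pow_d_bij (d : ℕ) (hd : 0 < d) (hgcd : Nat.gcd d (Fintype.card F - 1) = 1) :
    Function.Bijective (fun y : F => y ^ d) := by
  rw [Fintype.bijective_iff_surjective_and_card]
  refine ⟨fun c => ?_, rfl⟩
  rcases eq_or_ne c 0 with rfl | hc
  · exact ⟨0, zero_pow hd.ne'⟩
  · have h1 : (Nat.card Fˣ).Coprime d := by
      rw [Nat.card_eq_fintype_card, Fintype.card_units]
      exact Nat.Coprime.symm hgcd
    obtain ⟨u, hu⟩ := (powCoprime h1).surjective (Units.mk0 c hc)
    refine ⟨(u : F), ?_⟩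
    have := congrArg Units.val hu
    simpa [powCoprime] using this

end Aux


/-- Helleseth's power-moment identity:
`∑_{a ∈ F*} ∏_j W_{F,d}(b_j·a) = (q²·N − q^k)/(q − 1)`, where `N` counts the solutions of
`b_1x_1 + ⋯ + b_kx_k = 0` and `x_1^d + ⋯ + x_k^d = 0`. -/
theorem weilSum_product_moment (F : Type*) [Field F] [Fintype F] [DecidableEq F]
    (p : ℕ) [Fact p.Prime] [CharP F p] (d : ℕ) (hd : 0 < d)
    (hgcd : Nat.gcd d (Fintype.card F - 1) = 1)
    (k : ℕ) (hk : 0 < k) (b : Fin k → F) (hb : ∀ j, b j ≠ 0) :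
    ∑ a ∈ Finset.univ.filter (fun a : F => a ≠ 0), ∏ j, weilSum F p d (b j * a) =
      ((Fintype.card F : ℂ) ^ 2 *
          (Set.ncard {x : Fin k → F | ∑ j, b j * x j = 0 ∧ ∑ j, x j ^ d = 0} : ℂ)
        - (Fintype.card F : ℂ) ^ k) / ((Fintype.card F : ℂ) - 1) := by
  classical
  set S : (Fin k → F) → F := fun x => ∑ j, x j ^ d with hS
  set T : (Fin k → F) → F := fun x => ∑ j, b j * x j with hT
  set T0 : Finset (Fin k → F) := Finset.univ.filter (fun x => T x = 0) with hT0
  set A : ℂ := ∑ x ∈ T0, canonicalPsi F p (S x) with hA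
  set N : ℕ := (T0.filter (fun x => S x = 0)).card with hN
  have j0 : Fin k := ⟨0, hk⟩
  -- Step 1 : product of Weil sums
  have h1 : ∀ a : F, ∏ j, weilSum F p d (b j * a) =
      ∑ x : Fin k → F, canonicalPsi F p (S x - a * T x) := by
    intro a
    have e3 : ∏ j : Fin k, ∑ y : F, canonicalPsi F p (y ^ d - b j * a * y) =
        ∑ x ∈ Fintype.piFinset (fun _ : Fin k => (Finset.univ : Finset F)),
          ∏ j : Fin k, canonicalPsi F p (x j ^ d - b j * a * (x j)) :=
      Finset.prod_univ_sum _ _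
    calc ∏ j, weilSum F p d (b j * a)
        = ∏ j : Fin k, ∑ y : F, canonicalPsi F p (y ^ d - b j * a * y) := rfl
      _ = ∑ x ∈ Fintype.piFinset (fun _ : Fin k => (Finset.univ : Finset F)),
          ∏ j : Fin k, canonicalPsi F p (x j ^ d - b j * a * (x j)) := e3
      _ = ∑ x : Fin k → F, ∏ j : Fin k, canonicalPsi F p (x j ^ d - b j * a * (x j)) := by
          rw [Fintype.piFinset_univ]
      _ = ∑ x : Fin k → F, canonicalPsi F p (S x - a * T x) := by
          refine Finset.sum_congr rfl fun x _ => ?_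
          rw [← psi_sum]
          congr 1
          show ∑ j, (x j ^ d - b j * a * x j) = (∑ j, x j ^ d) - a * ∑ j, b j * x j
          rw [Finset.sum_sub_distrib, Finset.mul_sum]
          congr 1
          exact Finset.sum_congr rfl fun j _ => by ring
  -- sum of ψ(a*t) over nonzero a
  have hpsum : ∀ t : F, ∑ a ∈ Finset.univ.erase (0 : F), canonicalPsi F p (a * t) =
      (if t = 0 then (Fintype.card F : ℂ) else 0) - 1 := by
    intro t
    have h : canonicalPsi F p ((0 : F) * t) +
        ∑ a ∈ Finset.univ.erase (0 : F), canonicalPsi F p (a * t) =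
        ∑ a : F, canonicalPsi F p (a * t) :=
      Finset.add_sum_erase Finset.univ (fun a => canonicalPsi F p (a * t))
        (Finset.mem_univ (0 : F))
    have h2 : ∑ a : F, canonicalPsi F p (a * t) =
        if t = 0 then (Fintype.card F : ℂ) else 0 := sum_psi_mul t
    have h0 : canonicalPsi F p ((0 : F) * t) = 1 := by rw [zero_mul]; exact psi_zero
    rw [h0] at h
    rw [← h2, ← h]
    ring
  -- ∑_x ψ (S x) = 0
  have hS0 : ∑ x : Fin k → F, canonicalPsi F p (S x) = 0 := by
    have e2 : ∏ j : Fin k, ∑ y : F, canonicalPsi F p (y ^ d) =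
        ∑ x ∈ Fintype.piFinset (fun _ : Fin k => (Finset.univ : Finset F)),
          ∏ j : Fin k, canonicalPsi F p (x j ^ d) :=
      Finset.prod_univ_sum _ _
    calc ∑ x : Fin k → F, canonicalPsi F p (S x)
        = ∑ x : Fin k → F, ∏ j : Fin k, canonicalPsi F p (x j ^ d) :=
          Finset.sum_congr rfl fun x _ => psi_sum Finset.univ fun j => x j ^ d
      _ = ∑ x ∈ Fintype.piFinset (fun _ : Fin k => (Finset.univ : Finset F)),
          ∏ j : Fin k, canonicalPsi F p (x j ^ d) := by rw [Fintype.piFinset_univ]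
      _ = ∏ j : Fin k, ∑ y : F, canonicalPsi F p (y ^ d) := e2.symm
      _ = 0 := by
          refine Finset.prod_eq_zero (Finset.mem_univ j0) ?_
          rw [Fintype.sum_bijective _ (pow_d_bij d hd hgcd) _ (canonicalPsi F p) fun y => rfl]
          exact sum_psi
  -- scaling lemmas
  have hTmul : ∀ (u : F) (x : Fin k → F), T (fun j => u * x j) = u * T x := by
    intro u x
    show (∑ j, b j * (u * x j)) = u * ∑ j, b j * x j
    rw [Finset.mul_sum]
    exact Finset.sum_congr rfl fun j _ => by ring
  have hSmul : ∀ (u : F) (x : Fin k → F), S (fun j => u * x j) = u ^ d * S x := by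
    intro u x
    show (∑ j, (u * x j) ^ d) = u ^ d * ∑ j, x j ^ d
    rw [Finset.mul_sum]
    exact Finset.sum_congr rfl fun j _ => by rw [mul_pow]
  -- key counting identity
  have hkey : (Fintype.card F : ℂ) * N = (T0.card : ℂ) + ((Fintype.card F : ℂ) - 1) * A := by
    have way1 : ∑ x ∈ T0, ∑ c : F, canonicalPsi F p (c * S x) = (Fintype.card F : ℂ) * N := by
      calc ∑ x ∈ T0, ∑ c : F, canonicalPsi F p (c * S x)
          = ∑ x ∈ T0, (if S x = 0 then (Fintype.card F : ℂ) else 0) :=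
            Finset.sum_congr rfl fun x _ => sum_psi_mul (S x)
        _ = ∑ x ∈ T0.filter (fun x => S x = 0), (Fintype.card F : ℂ) :=
            (Finset.sum_filter _ _).symm
        _ = (N : ℂ) * (Fintype.card F : ℂ) := by
            rw [Finset.sum_const, nsmul_eq_mul, hN]
        _ = (Fintype.card F : ℂ) * N := mul_comm _ _
    have hc : ∀ c ∈ Finset.univ.erase (0 : F),
        ∑ x ∈ T0, canonicalPsi F p (c * S x) = A := by
      intro c hcmem
      have hc0 : c ≠ 0 := Finset.ne_of_mem_erase hcmem
      obtain ⟨u, hu⟩ := (pow_d_bij (F := F) d hd hgcd).surjective c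
      have hu : u ^ d = c := hu
      have hu0 : u ≠ 0 := by
        rintro rfl
        exact hc0 (by rw [← hu, zero_pow hd.ne'])
      rw [hA]
      refine Finset.sum_nbij' (i := fun x : Fin k → F => fun j => u * x j)
        (j := fun y : Fin k → F => fun j => u⁻¹ * y j) ?_ ?_ ?_ ?_ ?_
      · intro x hx
        rw [hT0, Finset.mem_filter] at hx ⊢
        exact ⟨Finset.mem_univ _, by rw [hTmul, hx.2, mul_zero]⟩
      · intro y hy
        rw [hT0, Finset.mem_filter] at hy ⊢
        exact ⟨Finset.mem_univ _, by rw [hTmul, hy.2, mul_zero]⟩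
      · intro x hx
        funext jj
        show u⁻¹ * (u * x jj) = x jj
        rw [inv_mul_cancel_left₀ hu0]
      · intro y hy
        funext jj
        show u * (u⁻¹ * y jj) = y jj
        rw [mul_inv_cancel_left₀ hu0]
      · intro x hx
        rw [hSmul, hu]
    have way2 : ∑ x ∈ T0, ∑ c : F, canonicalPsi F p (c * S x) =
        (T0.card : ℂ) + ((Fintype.card F : ℂ) - 1) * A := by
      rw [Finset.sum_comm]
      have h0 : ∑ x ∈ T0, canonicalPsi F p ((0 : F) * S x) = (T0.card : ℂ) := by
        simp [psi_zero]
      have h : (∑ x ∈ T0, canonicalPsi F p ((0 : F) * S x)) +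
          ∑ c ∈ Finset.univ.erase (0 : F), ∑ x ∈ T0, canonicalPsi F p (c * S x) =
          ∑ c : F, ∑ x ∈ T0, canonicalPsi F p (c * S x) :=
        Finset.add_sum_erase Finset.univ
          (fun c => ∑ x ∈ T0, canonicalPsi F p (c * S x)) (Finset.mem_univ (0 : F))
      rw [← h, h0, Finset.sum_congr rfl hc, Finset.sum_const, nsmul_eq_mul,
        Finset.card_erase_of_mem (Finset.mem_univ 0), Finset.card_univ,
        Nat.cast_sub Fintype.card_pos, Nat.cast_one]
    rw [← way1, way2]
  -- fiber counting: all fibers of T have the same cardinality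
  have T_update : ∀ (x : Fin k → F) (v : F),
      (∑ j, b j * Function.update x j0 v j) = (∑ j, b j * x j) - b j0 * x j0 + b j0 * v := by
    intro x v
    have hfun : ∀ j, b j * Function.update x j0 v j
        = Function.update (fun j => b j * x j) j0 (b j0 * v) j := by
      intro j
      rcases eq_or_ne j j0 with rfl | h
      · simp
      · simp [Function.update_of_ne h]
    rw [Finset.sum_congr rfl fun j _ => hfun j,
      Finset.sum_update_of_mem (Finset.mem_univ j0), ← Finset.erase_eq,
      Finset.sum_erase_eq_sub (Finset.mem_univ j0)]
    ring
  have hbne : b j0 ≠ 0 := hb j0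
  have hfib : ∀ t : F,
      (Finset.univ.filter (fun x : Fin k → F => T x = t)).card = T0.card := by
    intro t
    refine Finset.card_nbij' (i := fun x => Function.update x j0 (x j0 - t * (b j0)⁻¹))
      (j := fun y => Function.update y j0 (y j0 + t * (b j0)⁻¹)) ?_ ?_ ?_ ?_
    · intro x hx
      rw [Finset.mem_coe, Finset.mem_filter] at hx
      rw [hT0, Finset.mem_coe, Finset.mem_filter]
      refine ⟨Finset.mem_univ _, ?_⟩
      show (∑ j, b j * Function.update x j0 (x j0 - t * (b j0)⁻¹) j) = 0
      rw [T_update]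
      have hx2 : (∑ j, b j * x j) = t := hx.2
      rw [hx2]
      field_simp
      ring
    · intro y hy
      rw [hT0, Finset.mem_coe, Finset.mem_filter] at hy
      rw [Finset.mem_coe, Finset.mem_filter]
      refine ⟨Finset.mem_univ _, ?_⟩
      show (∑ j, b j * Function.update y j0 (y j0 + t * (b j0)⁻¹) j) = t
      rw [T_update]
      have hy2 : (∑ j, b j * y j) = 0 := hy.2
      rw [hy2]
      field_simp
      ring
    · intro x hx
      simp only [Function.update_idem, Function.update_self, sub_add_cancel,
        Function.update_eq_self]
    · intro y hy
      simp only [Function.update_idem, Function.update_self, add_sub_cancel_right,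
        Function.update_eq_self]
  have hcount : Fintype.card F ^ k = Fintype.card F * T0.card := by
    have h := Finset.card_eq_sum_card_fiberwise
      (s := (Finset.univ : Finset (Fin k → F))) (t := (Finset.univ : Finset F)) (f := T)
      (fun x _ => Finset.mem_univ (T x))
    rw [Finset.card_univ, Fintype.card_fun, Fintype.card_fin,
      Finset.sum_congr rfl fun t _ => hfib t, Finset.sum_const, smul_eq_mul,
      Finset.card_univ] at h
    exact h
  -- identify N with the ncard
  have hNcard : (Set.ncard {x : Fin k → F | ∑ j, b j * x j = 0 ∧ ∑ j, x j ^ d = 0}) = N := by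
    rw [Set.ncard_eq_toFinset_card', Set.toFinset_setOf, hN, hT0, Finset.filter_filter]
  -- main computation
  have hfilter : Finset.univ.filter (fun a : F => a ≠ 0) = Finset.univ.erase 0 :=
    Finset.filter_ne' _ _
  have hmain : ∑ a ∈ Finset.univ.filter (fun a : F => a ≠ 0),
      ∏ j, weilSum F p d (b j * a) = (Fintype.card F : ℂ) * A := by
    calc ∑ a ∈ Finset.univ.filter (fun a : F => a ≠ 0), ∏ j, weilSum F p d (b j * a)
        = ∑ a ∈ Finset.univ.erase (0 : F),
            ∑ x : Fin k → F, canonicalPsi F p (S x - a * T x) := by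
          rw [hfilter]; exact Finset.sum_congr rfl fun a _ => h1 a
      _ = ∑ x : Fin k → F, ∑ a ∈ Finset.univ.erase (0 : F),
            canonicalPsi F p (S x - a * T x) := Finset.sum_comm
      _ = ∑ x : Fin k → F, canonicalPsi F p (S x) *
            ((if T x = 0 then (Fintype.card F : ℂ) else 0) - 1) := by
          refine Finset.sum_congr rfl fun x _ => ?_
          have e4 : ∀ a : F, canonicalPsi F p (S x - a * T x) =
              canonicalPsi F p (S x) * canonicalPsi F p (a * (-T x)) := by
            intro a
            rw [← psi_add]
            congr 1
            ring
          rw [Finset.sum_congr rfl fun a _ => e4 a, ← Finset.mul_sum, hpsum (-T x)]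
          congr 2
          simp [neg_eq_zero]
      _ = (∑ x : Fin k → F, if T x = 0 then
              canonicalPsi F p (S x) * (Fintype.card F : ℂ) else 0)
          - ∑ x : Fin k → F, canonicalPsi F p (S x) := by
          rw [← Finset.sum_sub_distrib]
          refine Finset.sum_congr rfl fun x _ => ?_
          split <;> ring
      _ = (Fintype.card F : ℂ) * A := by
          rw [hS0, sub_zero, ← Finset.sum_filter, ← hT0, ← Finset.sum_mul, ← hA, mul_comm]
  rw [hmain, hNcard]
  have hq1 : (Fintype.card F : ℂ) - 1 ≠ 0 := by
    have h2 : 1 < Fintype.card F := Fintype.one_lt_card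
    have h3 : (Fintype.card F : ℂ) ≠ 1 := by
      exact_mod_cast Nat.ne_of_gt h2
    exact sub_ne_zero.mpr h3
  have hcountC : (Fintype.card F : ℂ) ^ k = (Fintype.card F : ℂ) * (T0.card : ℂ) := by
    exact_mod_cast congrArg (Nat.cast : ℕ → ℂ) hcount
  rw [eq_div_iff hq1]
  linear_combination -(Fintype.card F : ℂ) * hkey + hcountC
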